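/- Let G be a finite connected simple graph with minimum degree at least 2, let r = |E| − |V| + 1 ≥ 1 be its rank, and let κ_G be its number of spanning trees. Then the r-th derivative of the polynomial ζ_G(u)^{-1}, evaluated at u = 1, equals (−1)^{r−1} · 2^r · r! · (r−1) · κ_G. -/

import Mathlib

open Polynomial Matrix

/-- The reciprocal of the Ihara zeta function of a finite simple graph `G`, as a polynomial
in `ℤ[u]`: `(1 - u²)^(r-1) * det(I - A·u + Q·u²)`, where `A` is the adjacency matrix,
`Q = D - I` with `D` the degree matrix, and `r - 1 = |E| - |V|`. -/
noncomputable def iharaZetaInv {V : Type} [Fintype V] [DecidableEq V]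
    (G : SimpleGraph V) [DecidableRel G.Adj] : Polynomial ℤ :=
  (1 - X ^ 2) ^ (G.edgeFinset.card - Fintype.card V) *
    ((1 : Matrix V V (Polynomial ℤ)) - (X : Polynomial ℤ) • G.adjMatrix (Polynomial ℤ) +
      (X ^ 2 : Polynomial ℤ) • Matrix.diagonal (fun v => (G.degree v : Polynomial ℤ) - 1)).det

/-- The number of spanning trees of `G`: the number of subsets `E'` of the edge set such that
the graph on all of `V` with edge set `E'` is connected and acyclic (a tree). -/
noncomputable def spanningTreeCount {V : Type} [Fintype V] [DecidableEq V]
    (G : SimpleGraph V) [DecidableRel G.Adj] : ℕ :=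
  Set.ncard {E' : Finset (Sym2 V) |
    E' ⊆ G.edgeFinset ∧ (SimpleGraph.fromEdgeSet (E' : Set (Sym2 V))).IsTree}


namespace IharaMT

open Polynomial Matrix Finset SimpleGraph

section Incidence
variable {V : Type} [DecidableEq V]

/-- Orientation sign of a vertex in an edge (arbitrary orientation via `Quot.out`). -/
noncomputable def inc (v : V) (e : Sym2 V) : ℤ :=
  if v = (Quot.out e).1 then 1 else if v = (Quot.out e).2 then -1 else 0

lemma inc_of_not_mem {v : V} {e : Sym2 V} (h : v ∉ e) : inc v e = 0 := by
  have hx : v ≠ (Quot.out e).1 := fun hv => h (hv ▸ Sym2.out_fst_mem e)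
  have hy : v ≠ (Quot.out e).2 := fun hv => h (hv ▸ Sym2.out_snd_mem e)
  simp [inc, hx, hy]

lemma inc_cases {a c : V} (h : a ≠ c) :
    (inc a s(a,c) = 1 ∧ inc c s(a,c) = -1) ∨ (inc a s(a,c) = -1 ∧ inc c s(a,c) = 1) := by
  have hout : (Quot.mk (Sym2.Rel V) (Quot.out s(a,c)) : Sym2 V) = s(a,c) := Quot.out_eq _
  unfold inc
  generalize hq : Quot.out s(a,c) = p at hout ⊢
  obtain ⟨x, y⟩ := p
  rcases Sym2.eq_iff.mp hout with ⟨h1, h2⟩ | ⟨h1, h2⟩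
  · left; rw [h1, h2]; simp [h, h.symm]
  · right; rw [h1, h2]; simp [h, h.symm]

lemma inc_mul_point {a c : V} (h : a ≠ c) (w : V) :
    inc a s(a,c) * inc w s(a,c) =
      (if w = a then 1 else 0) - (if w = c then 1 else 0) := by
  by_cases hwa : w = a
  · subst hwa
    rcases inc_cases h with ⟨h1, _⟩ | ⟨h1, _⟩ <;> rw [h1] <;> simp [h]
  · by_cases hwc : w = c
    · subst hwc
      rcases inc_cases h with ⟨h1, h2⟩ | ⟨h1, h2⟩ <;> rw [h1, h2] <;> simp [hwa]
    · have : w ∉ s(a,c) := by simp [Sym2.mem_iff, hwa, hwc]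
      simp [inc_of_not_mem this, hwa, hwc]

lemma inc_sq {v : V} {e : Sym2 V} (hd : ¬ e.IsDiag) :
    inc v e * inc v e = if v ∈ e then 1 else 0 := by
  induction e with
  | _ x y =>
    by_cases hv : v ∈ s(x,y)
    · have hxy : x ≠ y := by simpa [Sym2.isDiag_iff_proj_eq] using hd
      rcases Sym2.mem_iff.mp hv with rfl | rfl
      · rcases inc_cases hxy with ⟨h1, _⟩ | ⟨h1, _⟩ <;> rw [h1] <;> simp [hv]
      · rcases inc_cases hxy with ⟨_, h2⟩ | ⟨_, h2⟩ <;> rw [h2] <;> simp [hv]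
    · simp [inc_of_not_mem hv, hv]

lemma inc_mul_of_ne {u v : V} (huv : u ≠ v) {e : Sym2 V} (hd : ¬ e.IsDiag) :
    inc u e * inc v e = if e = s(u,v) then -1 else 0 := by
  induction e with
  | _ x y =>
    by_cases he : s(x,y) = s(u,v)
    · rw [he, if_pos rfl]
      rcases inc_cases huv with ⟨h1, h2⟩ | ⟨h1, h2⟩ <;> rw [h1, h2] <;> simp
    · rw [if_neg he]
      by_cases hu : u ∈ s(x,y)
      · by_cases hv : v ∈ s(x,y)
        · exfalso
          apply he
          rcases Sym2.mem_iff.mp hu with rfl | rfl <;> rcases Sym2.mem_iff.mp hv with rfl | rfl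
          · exact absurd rfl huv
          · rfl
          · rw [Sym2.eq_swap]
          · exact absurd rfl huv
        · simp [inc_of_not_mem hv]
      · simp [inc_of_not_mem hu]


/-- Signed count of traversals of edge `e` by walk `p`. -/
noncomputable def dartCount {G' : SimpleGraph V} {a b : V} (p : G'.Walk a b) (e : Sym2 V) : ℤ :=
  (p.darts.map (fun d => if d.edge = e then inc d.toProd.1 d.edge else 0)).sum

lemma telescope {G' : SimpleGraph V} {S : Finset (Sym2 V)}
    (hsub : ∀ d : G'.Dart, d.edge ∈ S) {a b : V} (p : G'.Walk a b) (w : V) :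
    ∑ e : {e // e ∈ S}, inc w (e : Sym2 V) * dartCount p (e : Sym2 V) =
      (if w = a then 1 else 0) - (if w = b then 1 else 0) := by
  induction p with
  | nil => simp [dartCount]
  | @cons x y z hadj q ih =>
    have hd0 : (SimpleGraph.Dart.mk (x, y) hadj).edge = s(x, y) := rfl
    have hm : s(x, y) ∈ S := by simpa [hd0] using hsub (SimpleGraph.Dart.mk (x, y) hadj)
    have hsplit : ∀ e : {e // e ∈ S},
        dartCount (SimpleGraph.Walk.cons hadj q) (e : Sym2 V) =
          (if s(x,y) = (e : Sym2 V) then inc x s(x,y) else 0) + dartCount q (e : Sym2 V) := by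
      intro e
      simp [dartCount, SimpleGraph.Walk.darts_cons, hd0]
    simp only [hsplit, mul_add, Finset.sum_add_distrib]
    rw [ih]
    have hfirst : ∑ e : {e // e ∈ S},
        inc w (e : Sym2 V) * (if s(x,y) = (e : Sym2 V) then inc x s(x,y) else 0)
        = (if w = x then 1 else 0) - (if w = y then 1 else 0) := by
      rw [Finset.sum_eq_single (⟨s(x,y), hm⟩ : {e // e ∈ S})]
      · rw [if_pos rfl]
        rw [mul_comm]
        exact inc_mul_point hadj.ne w
      · intro e _ hne
        rw [if_neg, mul_zero]
        intro hcontra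
        exact hne (Subtype.ext hcontra.symm)
      · intro hcontra
        exact absurd (Finset.mem_univ _) hcontra
    rw [hfirst]
    ring

end Incidence

section CB
variable {W : Type} [Fintype W] [DecidableEq W]

/-- Row-expansion of `det (A * B)` over functions, with non-injective terms removed. -/
lemma det_mul_expand {β : Type} [Fintype β] [DecidableEq β] (A : Matrix W β ℤ) (B : Matrix β W ℤ) :
    (A * B).det = ∑ r ∈ (Finset.univ : Finset (W → β)).filter Function.Injective,
      (∏ w, A w (r w)) * (Matrix.of fun w w' => B (r w) w').det := by
  have hrows : (A * B) = Matrix.of fun w => ∑ e : β, A w e • (fun w' => B e w') := by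
    ext w w'
    simp [Matrix.mul_apply, Finset.sum_apply]
  have h1 : (A * B).det = ∑ r : W → β,
      (∏ w, A w (r w)) * (Matrix.of fun w w' => B (r w) w').det := by
    rw [hrows]
    have := (Matrix.detRowAlternating (R := ℤ) (n := W)).toMultilinearMap.map_sum
      (g := fun w (e : β) => A w e • (fun w' => B e w'))
    change (Matrix.detRowAlternating (R := ℤ) (n := W)).toMultilinearMap
      (fun w => ∑ e : β, A w e • (fun w' => B e w')) = _
    rw [this]
    refine Finset.sum_congr rfl fun r _ => ?_
    rw [(Matrix.detRowAlternating (R := ℤ) (n := W)).toMultilinearMap.map_smul_univ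
      (fun w => A w (r w)) (fun w w' => B (r w) w')]
    simp only [smul_eq_mul]
    rfl
  rw [h1, ← Finset.sum_filter_add_sum_filter_not Finset.univ Function.Injective]
  have h2 : ∑ r ∈ (Finset.univ : Finset (W → β)).filter (fun r => ¬ Function.Injective r),
      (∏ w, A w (r w)) * (Matrix.of fun w w' => B (r w) w').det = 0 := by
    refine Finset.sum_eq_zero fun r hr => ?_
    have hr' : ¬ Function.Injective r := (Finset.mem_filter.mp hr).2
    simp only [Function.Injective] at hr'
    push_neg at hr'
    obtain ⟨w1, w2, heq, hne⟩ := hr'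
    have : (Matrix.of fun w w' => B (r w) w').det = 0 :=
      Matrix.det_zero_of_row_eq hne (by ext w'; simp [heq])
    rw [this, mul_zero]
  rw [h2, add_zero]

noncomputable def tEquiv {E : Type} [Fintype E] [DecidableEq E] (T : Finset E)
    (h : T.card = Fintype.card W) : W ≃ {x // x ∈ T} :=
  Fintype.equivOfCardEq (by rw [Fintype.card_coe, h])

/-- The squared determinant of the square submatrix of `A` on columns `T`. -/
noncomputable def sqd {E : Type} [Fintype E] [DecidableEq E] (A : Matrix W E ℤ)
    (T : Finset E) : ℤ :=
  if h : T.card = Fintype.card W then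
    (Matrix.of fun w w' : W => A w ((tEquiv T h w' : E))).det ^ 2
  else 0

/-- Cauchy–Binet, specialized to `det (A * Aᵀ)`. -/
theorem det_mul_transpose_eq_sum_sqd {E : Type} [Fintype E] [DecidableEq E]
    (A : Matrix W E ℤ) :
    (A * Aᵀ).det = ∑ T ∈ Finset.powersetCard (Fintype.card W) (Finset.univ : Finset E),
      sqd A T := by
  rw [det_mul_expand]
  rw [← Finset.sum_fiberwise_of_maps_to (g := fun r : W → E => Finset.univ.image r)
    (t := Finset.powersetCard (Fintype.card W) (Finset.univ : Finset E)) ?hmaps]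
  case hmaps =>
    intro r hr
    simp only [Finset.mem_filter] at hr
    rw [Finset.mem_powersetCard]
    exact ⟨Finset.subset_univ _, by rw [Finset.card_image_of_injective _ hr.2, Finset.card_univ]⟩
  refine Finset.sum_congr rfl fun T hT => ?_
  rw [Finset.mem_powersetCard] at hT
  have hcard : T.card = Fintype.card W := hT.2
  -- inner sum equals det (C * Cᵀ) where C = A restricted to columns in T
  set C : Matrix W {x // x ∈ T} ℤ := Matrix.of fun w (t : {x // x ∈ T}) => A w (t : E) with hC
  have hinner : ∑ r ∈ ((Finset.univ : Finset (W → E)).filter Function.Injective).filter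
        (fun r => Finset.univ.image r = T),
      (∏ w, A w (r w)) * (Matrix.of fun w w' => Aᵀ (r w) w').det = (C * Cᵀ).det := by
    rw [det_mul_expand]
    refine Finset.sum_bij' (i := fun (r : W → E) hr => fun w : W =>
        (⟨r w, ?_⟩ : {x // x ∈ T})) (j := fun (ρ : W → {x // x ∈ T}) hρ => fun w => (ρ w : E))
      ?_ ?_ ?_ ?_ ?_
    · -- r w ∈ T
      simp only [Finset.mem_filter] at hr
      rw [← hr.2]
      exact Finset.mem_image_of_mem r (Finset.mem_univ w)
    · -- i maps into target
      intro r hr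
      simp only [Finset.mem_filter] at hr ⊢
      refine ⟨Finset.mem_univ _, fun w1 w2 h12 => hr.1.2 (by simpa [Subtype.ext_iff] using h12)⟩
    · -- j maps into source
      intro ρ hρ
      simp only [Finset.mem_filter] at hρ ⊢
      have hinj : Function.Injective fun w => ((ρ w : E)) :=
        fun w1 w2 h12 => hρ.2 (Subtype.ext h12)
      refine ⟨⟨Finset.mem_univ _, hinj⟩, ?_⟩
      -- image = T since ρ injective into T-subtype with card T = card W
      have hsurj : Function.Surjective ρ :=
        ((Fintype.bijective_iff_injective_and_card ρ).mpr
          ⟨hρ.2, by rw [Fintype.card_coe, hcard]⟩).2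
      apply Finset.Subset.antisymm
      · intro e he
        obtain ⟨w, _, rfl⟩ := Finset.mem_image.mp he
        exact (ρ w).2
      · intro e he
        obtain ⟨w, hw⟩ := hsurj ⟨e, he⟩
        exact Finset.mem_image.mpr ⟨w, Finset.mem_univ _, by rw [hw]⟩
    · intro r hr; rfl
    · intro ρ hρ; rfl
    · intro r hr
      congr 1
  rw [hinner]
  -- now reindex columns of C by the equivalence to get a square matrix
  set g := tEquiv (W := W) T hcard with hg
  have hCC : C * Cᵀ = (Matrix.of fun w w' : W => A w ((g w' : E))) *
      (Matrix.of fun w w' : W => A w ((g w' : E)))ᵀ := by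
    ext w w'
    simp only [Matrix.mul_apply, Matrix.transpose_apply, Matrix.of_apply, hC]
    exact (Equiv.sum_comp g (fun t => A w (t : E) * A w' (t : E))).symm
  rw [hCC, Matrix.det_mul, Matrix.det_transpose, sqd, dif_pos hcard, sq, hg]

end CB

section TreeDet
variable {V : Type} [DecidableEq V]

lemma det_eq_zero_of_mulVec {n : Type} [Fintype n] [DecidableEq n] (M : Matrix n n ℤ)
    (y : n → ℤ) (hy : y ≠ 0) (h : M.mulVec y = 0) : M.det = 0 := by
  have hq : ((Int.castRingHom ℚ).mapMatrix M).det = 0 := by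
    rw [← Matrix.exists_mulVec_eq_zero_iff]
    refine ⟨fun j => (y j : ℚ), ?_, ?_⟩
    · intro h0
      apply hy
      funext j
      have := congrFun h0 j
      simp only [Pi.zero_apply] at this ⊢
      exact_mod_cast this
    · funext j
      have := congrFun h j
      simp only [Matrix.mulVec, dotProduct, Pi.zero_apply, RingHom.mapMatrix_apply,
        Matrix.map_apply, Int.coe_castRingHom] at this ⊢
      exact_mod_cast this
  rw [← RingHom.map_det] at hq
  simp only [Int.coe_castRingHom] at hq
  exact_mod_cast hq

lemma det_eq_zero_of_vecMul {n : Type} [Fintype n] [DecidableEq n] (M : Matrix n n ℤ)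
    (y : n → ℤ) (hy : y ≠ 0) (h : M.vecMul y = 0) : M.det = 0 := by
  rw [← Matrix.det_transpose]
  apply det_eq_zero_of_mulVec _ y hy
  rw [Matrix.mulVec_transpose]
  exact h

lemma list_single_sum {α β : Type} [DecidableEq β] (f : α → β) (g : α → ℤ) :
    ∀ l : List α, (l.map f).Nodup → ∀ d0 ∈ l,
      (l.map (fun d => if f d = f d0 then g d else 0)).sum = g d0 := by
  intro l
  induction l with
  | nil => intro _ d0 h; simp at h
  | cons a t ih =>
    intro hnd d0 hd0
    simp only [List.map_cons, List.nodup_cons, List.sum_cons] at hnd ⊢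
    rcases List.mem_cons.mp hd0 with rfl | hmem
    · rw [if_pos rfl]
      have : (t.map (fun d => if f d = f d0 then g d else 0)).sum = 0 := by
        apply List.sum_eq_zero
        intro x hx
        obtain ⟨d, hd, rfl⟩ := List.mem_map.mp hx
        rw [if_neg]
        intro hc
        exact hnd.1 (by rw [← hc]; exact List.mem_map_of_mem (f := f) hd)
      rw [this, add_zero]
    · rw [ih hnd.2 d0 hmem, if_neg, zero_add]
      intro hc
      exact hnd.1 (by rw [hc]; exact List.mem_map_of_mem (f := f) hmem)

variable [Fintype V]

open scoped Classical in
/-- The key determinant computation: the square of the determinant of the reduced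
incidence-type matrix is 1 if the edge set forms a spanning tree, else 0. -/
theorem det_sq_tree (i : V) (S : Finset (Sym2 V)) (hS : ∀ e ∈ S, ¬ e.IsDiag)
    (g : {v : V // v ≠ i} ≃ {e // e ∈ S}) :
    (Matrix.of fun w w' : {v : V // v ≠ i} => inc (w : V) ((g w' : Sym2 V))).det ^ 2 =
      if (SimpleGraph.fromEdgeSet (S : Set (Sym2 V))).IsTree then 1 else 0 := by
  classical
  set G' := SimpleGraph.fromEdgeSet (S : Set (Sym2 V)) with hG'
  have hsub : ∀ d : G'.Dart, d.edge ∈ S := by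
    intro d
    have h2 : d.edge ∈ (S : Set (Sym2 V)) \ Sym2.diagSet := by
      rw [← SimpleGraph.edgeSet_fromEdgeSet (s := (S : Set (Sym2 V)))]
      exact d.edge_mem
    exact h2.1
  set C : Matrix {v : V // v ≠ i} {v : V // v ≠ i} ℤ :=
    Matrix.of fun w w' => inc (w : V) ((g w' : Sym2 V)) with hC
  by_cases htree : G'.IsTree
  · rw [if_pos htree]
    have hreach : ∀ w : V, G'.Reachable w i := fun w => htree.isConnected.preconnected w i
    set P : Matrix {v : V // v ≠ i} {v : V // v ≠ i} ℤ :=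
      Matrix.of fun w w' => dartCount (hreach (w' : V)).some ((g w : Sym2 V)) with hP
    have hCP : C * P = 1 := by
      ext w w''
      simp only [Matrix.mul_apply, hC, hP, Matrix.of_apply]
      rw [Equiv.sum_comp g
        (fun e : {e // e ∈ S} => inc (w : V) (e : Sym2 V) *
          dartCount (hreach (w'' : V)).some (e : Sym2 V))]
      rw [telescope hsub]
      have h2 : ¬ ((w : V) = i) := w.2
      by_cases hww : w = w''
      · subst hww
        simp [Matrix.one_apply, h2]
      · have h3 : ¬ ((w : V) = (w'' : V)) := fun h => hww (Subtype.ext h)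
        simp [Matrix.one_apply, h2, h3, hww]
    have hunit : IsUnit C.det := by
      apply IsUnit.of_mul_eq_one P.det
      rw [← Matrix.det_mul, hCP, Matrix.det_one]
    rcases Int.isUnit_iff.mp hunit with h1 | h1 <;> rw [h1] <;> norm_num
  · rw [if_neg htree]
    rw [pow_two]
    by_cases hconn : G'.Connected
    · -- must have a cycle
      have hacyc : ¬ G'.IsAcyclic := fun h => htree ⟨hconn, h⟩
      simp only [SimpleGraph.IsAcyclic] at hacyc
      push_neg at hacyc
      obtain ⟨v, c, hcyc⟩ := hacyc
      have hne : c.darts ≠ [] := by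
        intro h0
        have hlen := c.length_darts
        rw [h0] at hlen
        simp only [List.length_nil] at hlen
        have := hcyc.three_le_length
        omega
      obtain ⟨d0, hd0⟩ := List.exists_mem_of_ne_nil _ hne
      have he0 : d0.edge ∈ S := hsub d0
      set y : {v : V // v ≠ i} → ℤ := fun w' => dartCount c ((g w' : Sym2 V)) with hy
      have hdc : dartCount c d0.edge = inc d0.toProd.1 d0.edge := by
        rw [dartCount]
        refine list_single_sum SimpleGraph.Dart.edge _ c.darts ?_ d0 hd0
        have := hcyc.edges_nodup
        simpa [SimpleGraph.Walk.edges] using this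
      have hdc0 : dartCount c d0.edge ≠ 0 := by
        rw [hdc]
        have hadj : G'.Adj d0.toProd.1 d0.toProd.2 := d0.adj
        have hd0e : d0.edge = s(d0.toProd.1, d0.toProd.2) := rfl
        rw [hd0e]
        rcases inc_cases hadj.ne with ⟨h1, _⟩ | ⟨h1, _⟩ <;> rw [h1] <;> norm_num
      have hy0 : y ≠ 0 := by
        intro h0
        apply hdc0
        have := congrFun h0 (g.symm ⟨d0.edge, he0⟩)
        simpa [hy] using this
      have hdet : C.det = 0 := by
        apply det_eq_zero_of_mulVec _ y hy0
        funext w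
        simp only [Matrix.mulVec, dotProduct, hC, hy, Matrix.of_apply, Pi.zero_apply]
        rw [Equiv.sum_comp g
          (fun e : {e // e ∈ S} => inc (w : V) (e : Sym2 V) * dartCount c (e : Sym2 V))]
        rw [telescope hsub]
        simp
      rw [hdet, zero_mul]
    · -- not connected
      have : ∃ u, ¬ G'.Reachable i u := by
        by_contra h0
        push_neg at h0
        have : Nonempty V := ⟨i⟩
        exact hconn ⟨fun u u' => (h0 u).symm.trans (h0 u')⟩
      obtain ⟨v, hv⟩ := this
      have hvi : v ≠ i := by rintro rfl; exact hv (SimpleGraph.Reachable.refl _)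
      set Y : V → ℤ := fun u => if u = i then 0 else if G'.Reachable v u then 1 else 0 with hYdef
      set y : {v : V // v ≠ i} → ℤ := fun w => Y (w : V) with hy
      have hy0 : y ≠ 0 := by
        intro h0
        have := congrFun h0 ⟨v, hvi⟩
        simp [hy, hYdef, hvi] at this
      have hkey : ∀ e, e ∈ S → ∑ u : V, Y u * inc u e = 0 := by
        intro e
        induction e with
        | _ a c =>
          intro heS
          have hac : a ≠ c := by
            intro h0
            exact hS _ heS (by rw [h0]; exact Sym2.mk_isDiag_iff.mpr rfl)
          have hadj : G'.Adj a c := by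
            rw [hG', SimpleGraph.fromEdgeSet_adj]
            exact ⟨heS, hac⟩
          have hsum : ∑ u : V, Y u * inc u s(a,c)
              = ∑ u ∈ ({a, c} : Finset V), Y u * inc u s(a,c) := by
            apply (Finset.sum_subset (Finset.subset_univ _) _).symm
            intro u _ hu
            simp only [Finset.mem_insert, Finset.mem_singleton] at hu
            push_neg at hu
            rw [inc_of_not_mem (by simp [Sym2.mem_iff, hu.1, hu.2]), mul_zero]
          rw [hsum, Finset.sum_pair hac]
          by_cases hai : a = i
          · have hYa : Y a = 0 := by simp [hYdef, hai]
            have hci : Y c = 0 := by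
              simp only [hYdef]
              rw [if_neg (fun h0 : c = i => hac (hai.trans h0.symm)), if_neg]
              intro hr
              exact hv (((hai ▸ (hr.trans hadj.symm.reachable)) : G'.Reachable v i).symm)
            rw [hYa, hci]
            ring
          · by_cases hci : c = i
            · have hYc : Y c = 0 := by simp [hYdef, hci]
              have hYa : Y a = 0 := by
                simp only [hYdef]
                rw [if_neg hai, if_neg]
                intro hr
                exact hv (((hci ▸ (hr.trans hadj.reachable)) : G'.Reachable v i).symm)
              rw [hYa, hYc]
              ring
            · have hYac : Y a = Y c := by
                simp only [hYdef, if_neg hai, if_neg hci]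
                have hiff : G'.Reachable v a ↔ G'.Reachable v c :=
                  ⟨fun h => h.trans hadj.reachable, fun h => h.trans hadj.symm.reachable⟩
                by_cases h1 : G'.Reachable v a
                · rw [if_pos h1, if_pos (hiff.mp h1)]
                · rw [if_neg h1, if_neg (fun h2 => h1 (hiff.mpr h2))]
              rw [hYac, ← mul_add]
              rcases inc_cases hac with ⟨h1, h2⟩ | ⟨h1, h2⟩ <;> rw [h1, h2] <;> ring
      have hdet : C.det = 0 := by
        apply det_eq_zero_of_vecMul _ y hy0
        funext w'
        show ∑ w, y w * C w w' = 0
        have he : ((g w' : Sym2 V)) ∈ S := (g w').2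
        have h1 : ∑ u ∈ Finset.univ.filter (fun u => u ≠ i), Y u * inc u (g w' : Sym2 V)
            = ∑ u : V, Y u * inc u (g w' : Sym2 V) := by
          apply Finset.sum_filter_of_ne
          intro u _ hne hui
          apply hne
          subst hui
          simp [hYdef]
        have h2 : ∑ w : {v : V // v ≠ i}, Y (w : V) * inc (w : V) (g w' : Sym2 V)
            = ∑ u ∈ Finset.univ.filter (fun u => u ≠ i), Y u * inc u (g w' : Sym2 V) :=
          (Finset.sum_subtype (Finset.univ.filter (fun u => u ≠ i))
            (by intro x; simp) (fun u => Y u * inc u (g w' : Sym2 V))).symm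
        calc ∑ w, y w * C w w'
            = ∑ w : {v : V // v ≠ i}, Y (w : V) * inc (w : V) (g w' : Sym2 V) := rfl
          _ = 0 := by rw [h2, h1, hkey _ he]
      rw [hdet, zero_mul]

/-- The incidence matrix of `G` (with an arbitrary orientation). -/
noncomputable def incMatrix (G : SimpleGraph V) [DecidableRel G.Adj] :
    Matrix V {e // e ∈ G.edgeFinset} ℤ :=
  Matrix.of fun v e => inc v (e : Sym2 V)

theorem lapMatrix_eq_inc_mul (G : SimpleGraph V) [DecidableRel G.Adj] :
    G.lapMatrix ℤ = incMatrix G * (incMatrix G)ᵀ := by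
  ext u v
  simp only [Matrix.mul_apply, Matrix.transpose_apply, incMatrix, Matrix.of_apply]
  rw [← Finset.sum_subtype G.edgeFinset (fun e => Iff.rfl) (fun e => inc u e * inc v e)]
  by_cases huv : u = v
  · subst huv
    rw [Finset.sum_congr rfl (fun e he => inc_sq (G.not_isDiag_of_mem_edgeSet (mem_edgeFinset.mp he)))]
    rw [Finset.sum_boole]
    rw [← SimpleGraph.incidenceFinset_eq_filter, SimpleGraph.card_incidenceFinset_eq_degree]
    simp only [SimpleGraph.lapMatrix, SimpleGraph.degMatrix, SimpleGraph.adjMatrix,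
      Matrix.sub_apply, Matrix.of_apply, if_pos rfl, SimpleGraph.irrefl, if_false,
      Matrix.diagonal_apply_eq]
    ring
  · rw [Finset.sum_congr rfl
      (fun e he => inc_mul_of_ne huv (G.not_isDiag_of_mem_edgeSet (mem_edgeFinset.mp he)))]
    rw [Finset.sum_ite_eq' G.edgeFinset (s(u,v)) (fun _ => (-1 : ℤ))]
    simp only [SimpleGraph.lapMatrix, SimpleGraph.degMatrix, SimpleGraph.adjMatrix,
      Matrix.sub_apply, Matrix.of_apply, huv, if_false, mem_edgeFinset, mem_edgeSet]
    by_cases hadj : G.Adj u v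
    · simp [hadj, Matrix.diagonal_apply_ne _ huv]
    · simp [hadj, Matrix.diagonal_apply_ne _ huv]

lemma det_updateColumn_single (L : Matrix V V ℤ) (i : V) :
    (L.updateCol i (Pi.single i 1)).det =
      (Matrix.of fun w w' : {v : V // v ≠ i} => L (w : V) (w' : V)).det := by
  classical
  set e : ({x : V // x = i} ⊕ {v : V // v ≠ i}) ≃ V :=
    (Equiv.sumCongr (Equiv.refl _) (Equiv.subtypeEquivRight (fun x => Iff.rfl))).trans
      (Equiv.sumCompl (fun x => x = i)) with he
  rw [← Matrix.det_submatrix_equiv_self e]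
  have hblock : (L.updateCol i (Pi.single i 1)).submatrix e e =
      Matrix.fromBlocks 1 (Matrix.of fun (_ : {x : V // x = i}) (b : {v : V // v ≠ i}) => L i (b : V)) 0
        (Matrix.of fun w w' : {v : V // v ≠ i} => L (w : V) (w' : V)) := by
    ext x y
    have hei : ∀ a : {x : V // x = i}, e (Sum.inl a) = i := fun a => by
      simp [he, Equiv.sumCompl, a.2]
    have her : ∀ b : {v : V // v ≠ i}, e (Sum.inr b) = (b : V) := fun b => by
      simp [he, Equiv.sumCompl]
    cases x with
    | inl a =>
      cases y with
      | inl b =>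
        simp only [Matrix.submatrix_apply, hei, Matrix.updateCol_apply, if_pos rfl,
          Pi.single_apply, Matrix.fromBlocks_apply₁₁]
        have hab : a = b := Subsingleton.elim a b
        simp [hab, Matrix.one_apply]
      | inr b =>
        simp only [Matrix.submatrix_apply, hei, her, Matrix.updateCol_apply,
          Matrix.fromBlocks_apply₁₂, Matrix.of_apply]
        rw [if_neg b.2]
    | inr a =>
      cases y with
      | inl b =>
        simp only [Matrix.submatrix_apply, hei, her, Matrix.updateCol_apply, if_pos rfl,
          Pi.single_apply, Matrix.fromBlocks_apply₂₁, Matrix.zero_apply]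
        simp [a.2]
      | inr b =>
        simp only [Matrix.submatrix_apply, her, Matrix.updateCol_apply,
          Matrix.fromBlocks_apply₂₂, Matrix.of_apply]
        rw [if_neg b.2]
  rw [hblock, Matrix.det_fromBlocks_zero₂₁, Matrix.det_one, one_mul]

open scoped Classical in
/-- The number of spanning trees as a `Finset` count. -/
noncomputable def treeCount (G : SimpleGraph V) [DecidableRel G.Adj] : ℕ :=
  ((G.edgeFinset.powerset).filter
    (fun E' : Finset (Sym2 V) => (SimpleGraph.fromEdgeSet (E' : Set (Sym2 V))).IsTree)).card

lemma card_tree_edges (E' : Finset (Sym2 V)) (hd : ∀ e ∈ E', ¬ e.IsDiag)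
    (ht : (SimpleGraph.fromEdgeSet (E' : Set (Sym2 V))).IsTree) :
    E'.card + 1 = Fintype.card V := by
  classical
  haveI : Fintype ((SimpleGraph.fromEdgeSet (E' : Set (Sym2 V))).edgeSet) :=
    ((E'.finite_toSet.subset (by
      rw [SimpleGraph.edgeSet_fromEdgeSet]; exact Set.diff_subset))).fintype
  have h1 := ht.card_edgeFinset
  have hfe : (SimpleGraph.fromEdgeSet (E' : Set (Sym2 V))).edgeFinset = E' := by
    ext ed
    rw [SimpleGraph.mem_edgeFinset]
    constructor
    · intro h
      rw [SimpleGraph.edgeSet_fromEdgeSet] at h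
      exact h.1
    · intro h
      rw [SimpleGraph.edgeSet_fromEdgeSet]
      exact ⟨h, hd ed h⟩
  rw [hfe] at h1
  exact h1

lemma card_ne (i : V) : Fintype.card {v : V // v ≠ i} = Fintype.card V - 1 := by
  have h1 : Fintype.card {v : V // ¬ v = i} = Fintype.card V - Fintype.card {v : V // v = i} :=
    Fintype.card_subtype_compl _
  rw [Fintype.card_subtype_eq] at h1
  exact h1

open scoped Classical in
theorem det_lap_minor (G : SimpleGraph V) [DecidableRel G.Adj] (i : V) :
    ((G.lapMatrix ℤ).updateCol i (Pi.single i 1)).det = (treeCount G : ℤ) := by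
  rw [det_updateColumn_single]
  set A : Matrix {v : V // v ≠ i} {e // e ∈ G.edgeFinset} ℤ :=
    (incMatrix G).submatrix (fun w : {v : V // v ≠ i} => (w : V)) id with hA
  have hrestrict : (Matrix.of fun w w' : {v : V // v ≠ i} => G.lapMatrix ℤ (w : V) (w' : V))
      = A * Aᵀ := by
    ext w w'
    simp [lapMatrix_eq_inc_mul G, Matrix.mul_apply, hA, incMatrix]
  rw [hrestrict, det_mul_transpose_eq_sum_sqd]
  set emb : {e // e ∈ G.edgeFinset} ↪ Sym2 V := ⟨Subtype.val, Subtype.val_injective⟩ with hemb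
  have hsq : ∀ T ∈ Finset.powersetCard (Fintype.card {v : V // v ≠ i})
      (Finset.univ : Finset {e // e ∈ G.edgeFinset}),
      sqd A T = if (SimpleGraph.fromEdgeSet ((T.map emb : Finset (Sym2 V)) : Set (Sym2 V))).IsTree
        then 1 else 0 := by
    intro T hT
    have hTc : T.card = Fintype.card {v : V // v ≠ i} := (Finset.mem_powersetCard.mp hT).2
    rw [sqd, dif_pos hTc]
    set S : Finset (Sym2 V) := T.map emb with hSdef
    have hS : ∀ e ∈ S, ¬ e.IsDiag := by
      intro e he
      obtain ⟨x, hx, rfl⟩ := Finset.mem_map.mp he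
      exact G.not_isDiag_of_mem_edgeSet (SimpleGraph.mem_edgeFinset.mp x.2)
    have hq : Function.Bijective (fun x : {x // x ∈ T} => (⟨(x : {e // e ∈ G.edgeFinset}).val,
        Finset.mem_map_of_mem emb x.2⟩ : {e // e ∈ S})) := by
      constructor
      · intro x y hxy
        have h' := congrArg (fun z : {e // e ∈ S} => (z : Sym2 V)) hxy
        exact Subtype.ext (Subtype.ext h')
      · rintro ⟨e, he⟩
        obtain ⟨x, hx, rfl⟩ := Finset.mem_map.mp he
        exact ⟨⟨x, hx⟩, rfl⟩
    set q : {x // x ∈ T} ≃ {e // e ∈ S} := Equiv.ofBijective _ hq with hqdef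
    have := det_sq_tree i S hS ((tEquiv T hTc).trans q)
    convert this using 3
    rfl
  rw [Finset.sum_congr rfl hsq, Finset.sum_boole]
  have hcount : (Finset.filter
      (fun T => (SimpleGraph.fromEdgeSet ((T.map emb : Finset (Sym2 V)) : Set (Sym2 V))).IsTree)
      (Finset.powersetCard (Fintype.card {v : V // v ≠ i})
        (Finset.univ : Finset {e // e ∈ G.edgeFinset}))).card = treeCount G := by
    rw [treeCount]
    apply Finset.card_bij (fun T _ => T.map emb)
    · -- maps to
      intro T hT
      simp only [Finset.mem_filter] at hT ⊢
      constructor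
      · rw [Finset.mem_powerset]
        intro e he
        obtain ⟨x, hx, rfl⟩ := Finset.mem_map.mp he
        exact x.2
      · exact hT.2
    · -- injective
      intro T1 h1 T2 h2 h12
      exact Finset.map_injective emb h12
    · -- surjective
      intro E' hE'
      simp only [Finset.mem_filter, Finset.mem_powerset] at hE'
      obtain ⟨hsub, htree⟩ := hE'
      have hd : ∀ e ∈ E', ¬ e.IsDiag := fun e he =>
        G.not_isDiag_of_mem_edgeSet (SimpleGraph.mem_edgeFinset.mp (hsub he))
      refine ⟨E'.attach.map ⟨fun x : {x // x ∈ E'} => (⟨x.val, hsub x.2⟩ : {e // e ∈ G.edgeFinset}),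
        fun a b hab => Subtype.ext (congrArg (fun z : {e // e ∈ G.edgeFinset} => (z : Sym2 V)) hab)⟩, ?_, ?_⟩
      · simp only [Finset.mem_filter, Finset.mem_powersetCard]
        have hmap : (E'.attach.map ⟨fun x : {x // x ∈ E'} => (⟨x.val, hsub x.2⟩ : {e // e ∈ G.edgeFinset}),
            fun a b hab => Subtype.ext (congrArg (fun z : {e // e ∈ G.edgeFinset} => (z : Sym2 V)) hab)⟩).map emb = E' := by
          ext ed
          simp only [Finset.mem_map, Finset.mem_attach, true_and, hemb,
            Function.Embedding.coeFn_mk]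
          constructor
          · rintro ⟨x, ⟨y, rfl⟩, rfl⟩
            exact y.2
          · intro h
            exact ⟨⟨ed, hsub h⟩, ⟨⟨ed, h⟩, rfl⟩, rfl⟩
        refine ⟨⟨Finset.subset_univ _, ?_⟩, ?_⟩
        · rw [Finset.card_map, Finset.card_attach, card_ne]
          have := card_tree_edges E' hd htree
          omega
        · rw [hmap]
          exact htree
      · ext ed
        simp only [Finset.mem_map, Finset.mem_attach, true_and, hemb,
          Function.Embedding.coeFn_mk]
        constructor
        · rintro ⟨x, ⟨y, rfl⟩, rfl⟩
          exact y.2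
        · intro h
          exact ⟨⟨ed, hsub h⟩, ⟨⟨ed, h⟩, rfl⟩, rfl⟩
  rw [hcount]

end TreeDet

lemma derivative_finset_prod {ι : Type} [DecidableEq ι] (s : Finset ι) (f : ι → ℤ[X]) :
    derivative (∏ i ∈ s, f i) = ∑ i ∈ s, (∏ j ∈ s.erase i, f j) * derivative (f i) := by
  rw [Finset.prod_eq_multiset_prod, Polynomial.derivative_prod, Finset.sum_eq_multiset_sum]
  congr 1

lemma iterate_deriv_factor (a : ℤ) : ∀ (n : ℕ) (p : ℤ[X]),
    (derivative^[n] ((X - C a) ^ n * p)).eval a = (n.factorial : ℤ) * p.eval a := by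
  intro n
  induction n with
  | zero => intro p; simp
  | succ n ih =>
    intro p
    rw [Function.iterate_succ_apply]
    have hd : derivative ((X - C a) ^ (n + 1) * p)
        = (X - C a) ^ n * ((C ((n : ℤ) + 1)) * p + (X - C a) * derivative p) := by
      rw [derivative_mul, derivative_pow, derivative_sub, derivative_X, derivative_C, sub_zero,
        mul_one]
      push_cast
      ring
    rw [hd, ih]
    rw [eval_add, eval_mul, eval_mul, eval_sub, eval_X, eval_C, eval_C, sub_self, zero_mul,
      add_zero, Nat.factorial_succ]
    push_cast
    ring

lemma eval_derivative_det {n : Type} [Fintype n] [DecidableEq n] (M : Matrix n n ℤ[X]) (a : ℤ) :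
    (derivative M.det).eval a =
      ∑ j, ((M.map (eval a)).updateCol j (fun k => (derivative (M k j)).eval a)).det := by
  rw [Matrix.det_apply']
  rw [map_sum derivative]
  rw [eval_finset_sum]
  have hterm : ∀ σ : Equiv.Perm n,
      (derivative (((Equiv.Perm.sign σ : ℤ) : ℤ[X]) * ∏ i, M (σ i) i)).eval a
      = ∑ j, ((Equiv.Perm.sign σ : ℤ) *
          ((∏ i ∈ Finset.univ.erase j, (M (σ i) i).eval a) * (derivative (M (σ j) j)).eval a)) := by
    intro σ
    rw [derivative_mul, derivative_finset_prod]
    have : derivative (((Equiv.Perm.sign σ : ℤ) : ℤ[X])) = 0 := by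
      simp
    rw [this, zero_mul, zero_add, eval_mul, eval_finset_sum]
    rw [Finset.mul_sum]
    refine Finset.sum_congr rfl fun j _ => ?_
    rw [eval_mul, eval_prod]
    simp
  rw [Finset.sum_congr rfl (fun σ _ => hterm σ)]
  rw [Finset.sum_comm]
  refine Finset.sum_congr rfl fun j _ => ?_
  rw [Matrix.det_apply']
  refine Finset.sum_congr rfl fun σ _ => ?_
  congr 1
  have hsplit : ∏ i, ((M.map (eval a)).updateCol j (fun k => (derivative (M k j)).eval a)) (σ i) i
      = (((M.map (eval a)).updateCol j (fun k => (derivative (M k j)).eval a)) (σ j) j) *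
        ∏ i ∈ Finset.univ.erase j, ((M.map (eval a)).updateCol j
          (fun k => (derivative (M k j)).eval a)) (σ i) i :=
    (Finset.mul_prod_erase Finset.univ _ (Finset.mem_univ j)).symm
  rw [hsplit]
  rw [Matrix.updateCol_apply, if_pos rfl]
  rw [Finset.prod_congr rfl (fun i hi => ?_)]
  · ring
  · rw [Matrix.updateCol_apply, if_neg (Finset.mem_erase.mp hi).1, Matrix.map_apply]

section STC
variable {V : Type} [DecidableEq V] [Fintype V]

lemma spanningTreeCount_eq (G : SimpleGraph V) [DecidableRel G.Adj] :
    spanningTreeCount G = treeCount G := by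
  classical
  have hset : {E' : Finset (Sym2 V) |
      E' ⊆ G.edgeFinset ∧ (SimpleGraph.fromEdgeSet (E' : Set (Sym2 V))).IsTree}
      = ↑((G.edgeFinset.powerset).filter
        (fun E' : Finset (Sym2 V) => (SimpleGraph.fromEdgeSet (E' : Set (Sym2 V))).IsTree)) := by
    ext E'
    simp [Finset.mem_powerset]
  rw [spanningTreeCount, hset, Set.ncard_coe_finset, treeCount]


end STC

end IharaMT

open IharaMT in
/-- For a finite connected simple graph `G` with minimum degree at least 2 and rank
`r = |E| - |V| + 1 ≥ 1`, the `r`-th derivative of `ζ_G(u)⁻¹` at `u = 1` equals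
`(-1)^(r-1) · 2^r · r! · (r-1) · κ_G`, where `κ_G` is the number of spanning trees of `G`. -/
theorem iterated_deriv_iharaZetaInv_eval_one {V : Type} [Fintype V] [DecidableEq V]
    (G : SimpleGraph V) [DecidableRel G.Adj]
    (hconn : G.Connected) (hdeg : ∀ v, 2 ≤ G.degree v)
    (hVE : Fintype.card V ≤ G.edgeFinset.card)
    (r : ℕ) (hr : r = G.edgeFinset.card - Fintype.card V + 1) :
    (derivative^[r] (iharaZetaInv G)).eval 1 =
      (-1 : ℤ) ^ (r - 1) * 2 ^ r * (Nat.factorial r : ℤ) * ((r : ℤ) - 1) *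
        (spanningTreeCount G : ℤ) := by
  classical
  have hn : Nonempty V := hconn.nonempty
  set n := Fintype.card V with hnn
  set m := G.edgeFinset.card with hm
  set k := m - n with hk
  set M : Matrix V V ℤ[X] :=
    (1 : Matrix V V (Polynomial ℤ)) - (X : Polynomial ℤ) • G.adjMatrix (Polynomial ℤ) +
      (X ^ 2 : Polynomial ℤ) • Matrix.diagonal (fun v => (G.degree v : Polynomial ℤ) - 1)
    with hM
  set h : ℤ[X] := M.det with hh
  have hmap : M.map (eval 1) = G.lapMatrix ℤ := by
    ext u v
    simp only [hM, Matrix.map_apply, Matrix.add_apply, Matrix.sub_apply, Matrix.smul_apply,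
      smul_eq_mul, eval_add, eval_sub, eval_mul, eval_pow, eval_X, eval_one,
      SimpleGraph.lapMatrix, SimpleGraph.degMatrix, SimpleGraph.adjMatrix, Matrix.of_apply]
    by_cases huv : u = v
    · subst huv
      simp [Matrix.one_apply, Matrix.diagonal_apply_eq]
    · simp [Matrix.one_apply_ne huv, Matrix.diagonal_apply_ne _ huv, huv,
        apply_ite (eval (1 : ℤ))]
  have hder : ∀ u v, (derivative (M u v)).eval 1 =
      G.lapMatrix ℤ u v + (if u = v then (G.degree u : ℤ) - 2 else 0) := by
    intro u v
    simp only [hM, Matrix.add_apply, Matrix.sub_apply, Matrix.smul_apply, smul_eq_mul,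
      derivative_add, derivative_sub, derivative_mul, derivative_X, derivative_one, eval_add,
      eval_sub, eval_mul, eval_pow, eval_X, eval_one,
      SimpleGraph.lapMatrix, SimpleGraph.degMatrix, SimpleGraph.adjMatrix, Matrix.of_apply]
    by_cases huv : u = v
    · subst huv
      simp [Matrix.one_apply, Matrix.diagonal_apply_eq, apply_ite (eval (1 : ℤ))]
      all_goals ring
    · simp [Matrix.one_apply_ne huv, Matrix.diagonal_apply_ne _ huv, huv,
        apply_ite (eval (1 : ℤ)), apply_ite derivative]
      all_goals ring
  have hL0 : (G.lapMatrix ℤ).det = 0 := by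
    apply det_eq_zero_of_mulVec _ (fun _ => 1)
    · intro h0
      obtain ⟨v⟩ := hn
      exact one_ne_zero (congrFun h0 v)
    · exact G.lapMatrix_mulVec_const_eq_zero
  have hd1 : (derivative h).eval 1 = (2 * (m : ℤ) - 2 * (n : ℤ)) * treeCount G := by
    rw [hh, eval_derivative_det, hmap]
    have hterm : ∀ j, ((G.lapMatrix ℤ).updateCol j
        (fun kk => (derivative (M kk j)).eval 1)).det = ((G.degree j : ℤ) - 2) * treeCount G := by
      intro j
      have hcol : (fun kk => (derivative (M kk j)).eval 1)
          = (fun kk => G.lapMatrix ℤ kk j) + ((G.degree j : ℤ) - 2) • Pi.single j 1 := by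
        funext kk
        rw [hder]
        simp only [Pi.add_apply, Pi.smul_apply, Pi.single_apply, smul_eq_mul]
        by_cases hkj : kk = j
        · subst hkj; simp
        · simp [hkj]
      rw [hcol, Matrix.det_updateCol_add, Matrix.updateCol_eq_self, hL0, zero_add,
        Matrix.det_updateCol_smul, det_lap_minor]
    rw [Finset.sum_congr rfl (fun j _ => hterm j)]
    rw [← Finset.sum_mul]
    congr 1
    have hdegsum : ∑ j : V, (G.degree j : ℤ) = 2 * (m : ℤ) := by
      exact_mod_cast congrArg (Nat.cast : ℕ → ℤ) G.sum_degrees_eq_twice_card_edges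
    rw [Finset.sum_sub_distrib, hdegsum, Finset.sum_const, Finset.card_univ]
    push_cast
    ring
  have heval1 : h.eval 1 = 0 := by
    have hmd := RingHom.map_det (evalRingHom (1 : ℤ)) M
    rw [hh]
    show eval 1 M.det = 0
    rw [show (eval 1 M.det) = (evalRingHom (1 : ℤ)) M.det from rfl, hmd,
      RingHom.mapMatrix_apply]
    rw [show ((evalRingHom (1 : ℤ) : ℤ[X] →+* ℤ) : ℤ[X] → ℤ) = eval 1 from rfl]
    rw [hmap]
    exact hL0
  obtain ⟨h₁, hh₁⟩ := (dvd_iff_isRoot.mpr heval1 : (X - C 1) ∣ h)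
  have hh₁1 : h₁.eval 1 = (derivative h).eval 1 := by
    rw [hh₁, derivative_mul, derivative_sub, derivative_X, derivative_C, sub_zero, one_mul]
    simp
  have hfact : iharaZetaInv G = (X - C 1) ^ r *
      ((-1 : ℤ[X]) ^ k * (X + 1) ^ k * h₁) := by
    rw [iharaZetaInv, ← hM, ← hh, hh₁, hr]
    have hfac2 : (1 - X ^ 2 : ℤ[X]) = -((X - C 1) * (X + 1)) := by
      rw [C_1]; ring
    rw [hfac2, ← hm, ← hnn, ← hk, neg_pow, mul_pow]
    ring
  rw [hfact, iterate_deriv_factor]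
  rw [eval_mul, eval_mul, eval_pow, eval_pow, eval_add, eval_X, eval_one, eval_neg, eval_one,
    hh₁1, hd1, spanningTreeCount_eq]
  have hrk : r = k + 1 := hr
  have hcast : (2 * (m : ℤ) - 2 * (n : ℤ)) = 2 * (k : ℤ) := by
    rw [hk]
    push_cast [Nat.cast_sub hVE]
    ring
  rw [hcast, hrk]
  have h1 : (k + 1) - 1 = k := by omega
  rw [h1]
  push_cast
  ring
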